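/- Fix an integer d ≥ 1, p ∈ (1,∞), a penalty function φ, and let (μ_t)_{t≥0} be a convolution semigroup in 𝒫_p(ℝ^d) with 𝒲_p(μ_t, δ_0) → 0 as t ↓ 0. Then for every f ∈ C₀(ℝ^d) and every sequence (t_n)_{n∈ℕ} in [0,∞) with t_n → 0, one has lim_{n→∞} ‖𝒮^n(t_n)f − f‖_∞ = 0. -/

import Mathlib

open MeasureTheory Filter Topology ENNReal NNReal Set ZeroAtInfty
noncomputable section

/-- Euclidean space ℝ^d. -/
abbrev Ed (d : ℕ) := EuclideanSpace ℝ (Fin d)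

/-- `𝒫_p(ℝ^d)`: Borel probability measures with finite `p`-th moment. -/
def MemPp {d : ℕ} (p : ℝ) (μ : Measure (Ed d)) : Prop :=
  IsProbabilityMeasure μ ∧ ∫⁻ x, (‖x‖₊ : ℝ≥0∞) ^ p ∂μ < ∞

/-- `γ` is a coupling of `μ` and `ν`. -/
def IsCoupling {d : ℕ} (γ : Measure (Ed d × Ed d)) (μ ν : Measure (Ed d)) : Prop :=
  γ.map Prod.fst = μ ∧ γ.map Prod.snd = ν

/-- The `p`-Wasserstein distance `𝒲_p(μ, ν)`. -/
def Wp {d : ℕ} (p : ℝ) (μ ν : Measure (Ed d)) : ℝ :=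
  (⨅ γ ∈ {γ : Measure (Ed d × Ed d) | IsCoupling γ μ ν},
    (∫⁻ q, (‖q.2 - q.1‖₊ : ℝ≥0∞) ^ p ∂γ) ^ (1 / p)).toReal

/-- The scaled penalty `φ_t(r) = t·φ(r/t)` for `t > 0`; `φ_0(0) = 0`, `φ_0(r) = ∞` for `r > 0`. -/
def phit (φ : ℝ≥0 → ℝ≥0∞) (t : ℝ) (r : ℝ≥0) : ℝ≥0∞ :=
  if 0 < t then (t.toNNReal : ℝ≥0∞) * φ (r / t.toNNReal) else (if r = 0 then 0 else ∞)

/-- `φ` is a penalty function: lower semicontinuous, convex, increasing, not constant,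
`φ(0) = 0`, and `x ↦ φ(x^{1/p})` is convex. -/
structure IsPenalty (p : ℝ) (φ : ℝ≥0 → ℝ≥0∞) : Prop where
  lsc : LowerSemicontinuous φ
  convex : ∀ a b l m : ℝ≥0, l + m = 1 →
    φ (l * a + m * b) ≤ (l : ℝ≥0∞) * φ a + (m : ℝ≥0∞) * φ b
  mono : Monotone φ
  not_const : ∃ a b, φ a ≠ φ b
  map_zero : φ 0 = 0
  convex_rpow : ∀ a b l m : ℝ≥0, l + m = 1 →
    φ ((l * a + m * b) ^ (1 / p)) ≤ (l : ℝ≥0∞) * φ (a ^ (1 / p)) + (m : ℝ≥0∞) * φ (b ^ (1 / p))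

/-- The convex conjugate `φ*(y) = sup_{x ≥ 0} (xy − φ(x))`. -/
def phiStar (φ : ℝ≥0 → ℝ≥0∞) (y : ℝ≥0) : ℝ≥0∞ :=
  ⨆ x : ℝ≥0, ((x * y : ℝ≥0) : ℝ≥0∞) - φ x

/-- The one-step operator `S(t)f(x) = sup_ν ( ∫ f(x+y) ν(dy) − φ_t(𝒲_p(μ_t, ν)) )`. -/
def Sop {d : ℕ} (p : ℝ) (φ : ℝ≥0 → ℝ≥0∞) (μt : Measure (Ed d)) (t : ℝ)
    (f : Ed d → ℝ) (x : Ed d) : ℝ :=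
  sSup { r : ℝ | ∃ ν : Measure (Ed d), MemPp p ν ∧ ∃ c : ℝ, 0 ≤ c ∧
    phit φ t (Wp p μt ν).toNNReal ≤ ENNReal.ofReal c ∧ r = (∫ y, f (x + y) ∂ν) - c }

/-- The iterated operator `𝒮ⁿ(t) = S(2⁻ⁿ)^{∘ k} ∘ S(t − k·2⁻ⁿ)`, `k = ⌊2ⁿ t⌋`. -/
def SiterN {d : ℕ} (p : ℝ) (φ : ℝ≥0 → ℝ≥0∞) (μ : ℝ → Measure (Ed d)) (n : ℕ) (t : ℝ)
    (f : Ed d → ℝ) : Ed d → ℝ :=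
  (fun g => Sop p φ (μ ((2 : ℝ) ^ n)⁻¹) ((2 : ℝ) ^ n)⁻¹ g)^[⌊(2:ℝ)^n * t⌋₊]
    (Sop p φ (μ (t - ⌊(2:ℝ)^n * t⌋₊ * ((2:ℝ)^n)⁻¹)) (t - ⌊(2:ℝ)^n * t⌋₊ * ((2:ℝ)^n)⁻¹) f)

/-- The limiting operator `𝒮(t)f = lim_n 𝒮ⁿ(t)f` (a decreasing limit, i.e. an infimum). -/
def Slim {d : ℕ} (p : ℝ) (φ : ℝ≥0 → ℝ≥0∞) (μ : ℝ → Measure (Ed d)) (t : ℝ)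
    (f : Ed d → ℝ) (x : Ed d) : ℝ :=
  ⨅ n : ℕ, SiterN p φ μ n t f x

/-- `f ∈ C₀(ℝ^d)`: continuous and vanishing at infinity. -/
def IsC0 {d : ℕ} (f : Ed d → ℝ) : Prop :=
  Continuous f ∧ Tendsto f (cocompact (Ed d)) (𝓝 0)

/-- `(μ_t)_{t ≥ 0}` is a convolution semigroup in `𝒫_p(ℝ^d)`. -/
def IsConvSemigroup {d : ℕ} (p : ℝ) (μ : ℝ → Measure (Ed d)) : Prop :=
  μ 0 = Measure.dirac 0 ∧ (∀ s t : ℝ, 0 ≤ s → 0 ≤ t → μ (s + t) = (μ s).conv (μ t)) ∧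
    ∀ t : ℝ, 0 ≤ t → MemPp p (μ t)

/-- `𝒲_p(μ_t, δ_0) → 0` as `t ↓ 0`. -/
def WContinuousAtZero {d : ℕ} (p : ℝ) (μ : ℝ → Measure (Ed d)) : Prop :=
  Tendsto (fun t => Wp p (μ t) (Measure.dirac 0)) (𝓝[>] (0:ℝ)) (𝓝 0)

/-- The semigroup of the underlying Lévy process, `S^μ(t)f(x) = ∫ f(x+y) μ_t(dy)`. -/
def Smu {d : ℕ} (μ : ℝ → Measure (Ed d)) (t : ℝ) (f : Ed d → ℝ) (x : Ed d) : ℝ :=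
  ∫ y, f (x + y) ∂(μ t)

/-- `f ∈ D(A^μ)` with `A^μ f = Af`: `(S^μ(t)f − f)/t → Af` uniformly as `t ↓ 0`. -/
def HasGenerator {d : ℕ} (μ : ℝ → Measure (Ed d)) (f Af : Ed d → ℝ) : Prop :=
  TendstoUniformly (fun t x => (Smu μ t f x - f x) / t) Af (𝓝[>] (0:ℝ))

/-- `f ∈ C₀¹(ℝ^d)`: continuously differentiable, vanishing at infinity, with gradient
vanishing at infinity. -/
def IsC01 {d : ℕ} (f : Ed d → ℝ) : Prop :=
  IsC0 f ∧ ContDiff ℝ 1 f ∧ Tendsto (fun x => gradient f x) (cocompact (Ed d)) (𝓝 0)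


section AuxLemmas

variable {d : ℕ}

/-! ### Basic measure/integral helpers -/

lemma hdiag (d : ℕ) : Measurable (fun x : Ed d => (x, x)) := by fun_prop

lemma integrable_shift (ν : Measure (Ed d)) [IsFiniteMeasure ν] {g : Ed d → ℝ} {B : ℝ}
    (hgc : Continuous g) (hgb : ∀ y, |g y| ≤ B) (x : Ed d) :
    MeasureTheory.Integrable (fun y => g (x + y)) ν := by
  refine (MeasureTheory.integrable_const B).mono'
    ((hgc.comp (continuous_const.add continuous_id)).aestronglyMeasurable) ?_
  exact Filter.Eventually.of_forall fun y => by simpa using hgb (x + y)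

lemma integral_shift_le (ν : Measure (Ed d)) [IsProbabilityMeasure ν] {g : Ed d → ℝ} {B : ℝ}
    (hgc : Continuous g) (hgb : ∀ y, |g y| ≤ B) (x : Ed d) :
    |∫ y, g (x + y) ∂ν| ≤ B := by
  calc |∫ y, g (x + y) ∂ν| ≤ ∫ y, |g (x + y)| ∂ν := by
        simpa [Real.norm_eq_abs] using
          MeasureTheory.norm_integral_le_integral_norm (fun y => g (x + y)) (μ := ν)
    _ ≤ ∫ _, B ∂ν := by
        refine MeasureTheory.integral_mono ((integrable_shift ν hgc hgb x).abs)
          (MeasureTheory.integrable_const B) fun y => hgb (x + y)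
    _ = B := by simp

/-! ### Wasserstein helpers -/

/-- The transport cost of a coupling. -/
def Wcost (p : ℝ) (γ : Measure (Ed d × Ed d)) : ℝ≥0∞ :=
  ∫⁻ q, (‖q.2 - q.1‖₊ : ℝ≥0∞) ^ p ∂γ

/-- `Wp` before applying `toReal`. -/
def WpE (p : ℝ) (μ ν : Measure (Ed d)) : ℝ≥0∞ :=
  ⨅ γ ∈ {γ : Measure (Ed d × Ed d) | IsCoupling γ μ ν}, (Wcost p γ) ^ (1/p)

lemma Wp_eq (p : ℝ) (μ ν : Measure (Ed d)) : Wp p μ ν = (WpE p μ ν).toReal := rfl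

lemma Wp_nonneg (p : ℝ) (μ ν : Measure (Ed d)) : 0 ≤ Wp p μ ν := ENNReal.toReal_nonneg

lemma isCoupling_diag (μ : Measure (Ed d)) :
    IsCoupling (μ.map (fun x => (x, x))) μ μ := by
  constructor
  · rw [Measure.map_map measurable_fst (hdiag _)]
    simp [Function.comp_def]
  · rw [Measure.map_map measurable_snd (hdiag _)]
    simp [Function.comp_def]

lemma WpE_self {p : ℝ} (hp : 0 < p) (μ : Measure (Ed d)) : WpE p μ μ = 0 := by
  refine le_antisymm ?_ zero_le
  refine le_trans (iInf₂_le (μ.map (fun x => (x, x))) (isCoupling_diag μ)) ?_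
  have : Wcost p (μ.map (fun x => (x, x))) = 0 := by
    rw [Wcost, MeasureTheory.lintegral_map ?_ (hdiag _)]
    · simp [ENNReal.zero_rpow_of_pos hp]
    · exact (measurable_snd.sub measurable_fst).nnnorm.coe_nnreal_ennreal.pow_const p
  rw [this, ENNReal.zero_rpow_of_pos (by positivity)]

lemma Wp_self {p : ℝ} (hp : 0 < p) (μ : Measure (Ed d)) : Wp p μ μ = 0 := by
  rw [Wp_eq, WpE_self hp]; rfl

lemma IsCoupling.isProb {γ : Measure (Ed d × Ed d)} {μ ν : Measure (Ed d)}
    (h : IsCoupling γ μ ν) (hμ : IsProbabilityMeasure μ) : IsProbabilityMeasure γ := by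
  constructor
  have h1 : γ.map Prod.fst Set.univ = μ Set.univ := by rw [h.1]
  rwa [Measure.map_apply measurable_fst MeasurableSet.univ, Set.preimage_univ,
    hμ.measure_univ] at h1

lemma lintegral_fst_coupling {γ : Measure (Ed d × Ed d)} {μ ν : Measure (Ed d)}
    (h : IsCoupling γ μ ν) {f : Ed d → ℝ≥0∞} (hf : Measurable f) :
    ∫⁻ q, f q.1 ∂γ = ∫⁻ x, f x ∂μ := by
  rw [← h.1, MeasureTheory.lintegral_map hf measurable_fst]

lemma lintegral_snd_coupling {γ : Measure (Ed d × Ed d)} {μ ν : Measure (Ed d)}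
    (h : IsCoupling γ μ ν) {f : Ed d → ℝ≥0∞} (hf : Measurable f) :
    ∫⁻ q, f q.2 ∂γ = ∫⁻ x, f x ∂ν := by
  rw [← h.2, MeasureTheory.lintegral_map hf measurable_snd]

lemma isCoupling_prod (μ ν : Measure (Ed d)) [IsProbabilityMeasure μ] [IsProbabilityMeasure ν] :
    IsCoupling (μ.prod ν) μ ν := by
  constructor
  · rw [Measure.map_fst_prod]; simp
  · rw [Measure.map_snd_prod]; simp

/-- moment functional -/
def mom (p : ℝ) (ν : Measure (Ed d)) : ℝ≥0∞ := ∫⁻ x, (‖x‖₊ : ℝ≥0∞) ^ p ∂ν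

lemma meas_nrp (p : ℝ) : Measurable (fun x : Ed d => (‖x‖₊ : ℝ≥0∞) ^ p) :=
  measurable_nnnorm.coe_nnreal_ennreal.pow_const p

lemma Wcost_le_of_coupling {p : ℝ} (hp : 0 ≤ p) {γ : Measure (Ed d × Ed d)}
    {μ ν : Measure (Ed d)} (h : IsCoupling γ μ ν) :
    Wcost p γ ≤ 2 ^ p * (mom p μ + mom p ν) := by
  have key : ∀ a b : ℝ≥0∞, (a + b) ^ p ≤ 2 ^ p * (a ^ p + b ^ p) := by
    intro a b
    calc (a + b) ^ p ≤ (2 * (a ⊔ b)) ^ p := by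
          refine ENNReal.rpow_le_rpow ?_ hp
          rw [two_mul]; exact add_le_add le_sup_left le_sup_right
      _ = 2 ^ p * (a ⊔ b) ^ p := ENNReal.mul_rpow_of_nonneg _ _ hp
      _ ≤ 2 ^ p * (a ^ p + b ^ p) := by
          gcongr
          rcases le_total a b with hab | hab
          · rw [sup_eq_right.2 hab]; exact le_add_self
          · rw [sup_eq_left.2 hab]; exact le_self_add
  have hmono : Wcost p γ ≤ ∫⁻ q, 2 ^ p * ((‖q.1‖₊ : ℝ≥0∞) ^ p + (‖q.2‖₊ : ℝ≥0∞) ^ p) ∂γ := by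
    refine MeasureTheory.lintegral_mono fun q => ?_
    refine le_trans ?_ (key _ _)
    refine ENNReal.rpow_le_rpow ?_ hp
    have := nnnorm_sub_le q.2 q.1
    calc (‖q.2 - q.1‖₊ : ℝ≥0∞) ≤ ((‖q.2‖₊ + ‖q.1‖₊ : ℝ≥0) : ℝ≥0∞) := by exact_mod_cast this
      _ = (‖q.1‖₊ : ℝ≥0∞) + ‖q.2‖₊ := by push_cast; ring
  refine hmono.trans ?_
  rw [MeasureTheory.lintegral_const_mul _ (by fun_prop),
    MeasureTheory.lintegral_add_left (by fun_prop)]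
  have h1 : ∫⁻ q : Ed d × Ed d, (fun x => (‖x‖₊ : ℝ≥0∞) ^ p) q.1 ∂γ = mom p μ :=
    lintegral_fst_coupling h (meas_nrp p)
  have h2 : ∫⁻ q : Ed d × Ed d, (fun x => (‖x‖₊ : ℝ≥0∞) ^ p) q.2 ∂γ = mom p ν :=
    lintegral_snd_coupling h (meas_nrp p)
  simp only at h1 h2
  rw [h1, h2]

lemma WpE_lt_top {p : ℝ} (hp : 0 < p) {μ ν : Measure (Ed d)}
    (hμ : MemPp p μ) (hν : MemPp p ν) : WpE p μ ν < ∞ := by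
  haveI := hμ.1; haveI := hν.1
  refine lt_of_le_of_lt (iInf₂_le (μ.prod ν) (isCoupling_prod μ ν)) ?_
  refine ENNReal.rpow_lt_top_of_nonneg (by positivity) ?_
  refine ne_of_lt (lt_of_le_of_lt (Wcost_le_of_coupling hp.le (isCoupling_prod μ ν)) ?_)
  exact ENNReal.mul_lt_top (ENNReal.rpow_lt_top_of_nonneg hp.le (by simp))
    (ENNReal.add_lt_top.2 ⟨hμ.2, hν.2⟩)
end AuxLemmas
section AuxLemmas2
variable {d : ℕ}

/-- Hölder: `∫ g ≤ (∫ g^p)^{1/p}` for probability measures. -/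
lemma lintegral_le_rpow {α : Type*} [MeasurableSpace α] (γ : Measure α) [IsProbabilityMeasure γ]
    {p : ℝ} (hp : 1 < p) {g : α → ℝ≥0∞} (hg : AEMeasurable g γ) :
    ∫⁻ x, g x ∂γ ≤ (∫⁻ x, (g x) ^ p ∂γ) ^ (1/p) := by
  have hpq : p.HolderConjugate (p / (p - 1)) := Real.HolderConjugate.conjExponent hp
  have h := ENNReal.lintegral_mul_le_Lp_mul_Lq γ hpq hg aemeasurable_const (g := fun _ => 1)
  simpa using h

lemma MemPp_dirac {p : ℝ} (hp : 0 < p) : MemPp p (Measure.dirac (0 : Ed d)) := by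
  constructor
  · infer_instance
  · rw [MeasureTheory.lintegral_dirac' _ (meas_nrp p)]
    simp [ENNReal.zero_rpow_of_pos hp]

lemma Wcost_coupling_dirac {p : ℝ} {γ : Measure (Ed d × Ed d)} {μ : Measure (Ed d)}
    (h : IsCoupling γ μ (Measure.dirac 0)) : Wcost p γ = mom p μ := by
  have hae : ∀ᵐ q ∂γ, q.2 = (0 : Ed d) := by
    have : γ (Prod.snd ⁻¹' {(0 : Ed d)}ᶜ) = 0 := by
      rw [← Measure.map_apply measurable_snd (measurableSet_singleton (0:Ed d)).compl, h.2]
      simp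
    rw [MeasureTheory.ae_iff]
    convert this using 2
    rfl
  calc Wcost p γ = ∫⁻ q, (‖q.1‖₊ : ℝ≥0∞) ^ p ∂γ := by
        refine MeasureTheory.lintegral_congr_ae ?_
        filter_upwards [hae] with q hq
        rw [hq]; simp
    _ = mom p μ := lintegral_fst_coupling h (meas_nrp p)

lemma WpE_dirac {p : ℝ} {μ : Measure (Ed d)} (hμ : IsProbabilityMeasure μ) :
    WpE p μ (Measure.dirac 0) = (mom p μ) ^ (1/p) := by
  haveI := hμ
  refine le_antisymm ?_ ?_
  · refine le_trans (iInf₂_le (μ.prod (Measure.dirac 0)) (isCoupling_prod _ _)) ?_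
    rw [Wcost_coupling_dirac (isCoupling_prod _ _)]
  · refine le_iInf₂ fun γ hγ => ?_
    rw [Wcost_coupling_dirac hγ]

/-- Key estimate: difference of integrals against two measures is controlled by `L · Wp`. -/
lemma key_diff_abs {p : ℝ} (hp : 1 < p) {μ ν : Measure (Ed d)}
    (hμ : MemPp p μ) (hν : MemPp p ν) {g : Ed d → ℝ} {L : ℝ≥0} (hg : LipschitzWith L g)
    {B : ℝ} (hgb : ∀ y, |g y| ≤ B) (x : Ed d) :
    |(∫ y, g (x + y) ∂ν) - ∫ y, g (x + y) ∂μ| ≤ (L : ℝ) * Wp p μ ν := by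
  haveI := hμ.1; haveI := hν.1
  have hgc := hg.continuous
  have hp0 : (0:ℝ) < p := lt_trans one_pos hp
  -- step 1: per-coupling estimate
  have percoupling : ∀ γ : Measure (Ed d × Ed d), IsCoupling γ μ ν → Wcost p γ ≠ ∞ →
      |(∫ y, g (x + y) ∂ν) - ∫ y, g (x + y) ∂μ| ≤ (L : ℝ) * ((Wcost p γ) ^ (1/p)).toReal := by
    intro γ hγ hfin
    haveI : IsProbabilityMeasure γ := hγ.isProb hμ.1
    have hmeas : Measurable (fun q : Ed d × Ed d => (‖q.2 - q.1‖₊ : ℝ≥0∞)) :=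
      (measurable_snd.sub measurable_fst).nnnorm.coe_nnreal_ennreal
    have hL1 : ∫⁻ q, (‖q.2 - q.1‖₊ : ℝ≥0∞) ∂γ ≤ (Wcost p γ) ^ (1/p) :=
      lintegral_le_rpow γ hp hmeas.aemeasurable
    have hL1fin : ∫⁻ q, (‖q.2 - q.1‖₊ : ℝ≥0∞) ∂γ ≠ ∞ :=
      (lt_of_le_of_lt hL1 (ENNReal.rpow_lt_top_of_nonneg (by positivity) hfin)).ne
    -- the function q ↦ ‖q.2 - q.1‖ is integrable
    have hint : MeasureTheory.Integrable (fun q : Ed d × Ed d => ‖q.2 - q.1‖) γ := by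
      constructor
      · exact (continuous_snd.sub continuous_fst).norm.aestronglyMeasurable
      · rw [MeasureTheory.hasFiniteIntegral_def]
        simpa [← enorm_eq_nnnorm] using hL1fin.lt_top
    have hi2 : MeasureTheory.Integrable (fun q : Ed d × Ed d => g (x + q.2)) γ :=
      (MeasureTheory.integrable_const B).mono'
        ((hgc.comp (continuous_const.add continuous_snd)).aestronglyMeasurable)
        (Filter.Eventually.of_forall fun q => by simpa using hgb (x + q.2))
    have hi1 : MeasureTheory.Integrable (fun q : Ed d × Ed d => g (x + q.1)) γ :=
      (MeasureTheory.integrable_const B).mono'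
        ((hgc.comp (continuous_const.add continuous_fst)).aestronglyMeasurable)
        (Filter.Eventually.of_forall fun q => by simpa using hgb (x + q.1))
    have heq2 : ∫ y, g (x + y) ∂ν = ∫ q : Ed d × Ed d, g (x + q.2) ∂γ := by
      rw [← hγ.2, MeasureTheory.integral_map (f := fun y => g (x + y))
        measurable_snd.aemeasurable
        (Continuous.aestronglyMeasurable (by continuity))]
    have heq1 : ∫ y, g (x + y) ∂μ = ∫ q : Ed d × Ed d, g (x + q.1) ∂γ := by
      rw [← hγ.1, MeasureTheory.integral_map (f := fun y => g (x + y))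
        measurable_fst.aemeasurable
        (Continuous.aestronglyMeasurable (by continuity))]
    rw [heq1, heq2, ← MeasureTheory.integral_sub hi2 hi1]
    have pointwise : ∀ q : Ed d × Ed d, |g (x + q.2) - g (x + q.1)| ≤ (L:ℝ) * ‖q.2 - q.1‖ := by
      intro q
      have := hg.dist_le_mul (x + q.2) (x + q.1)
      rwa [Real.dist_eq, dist_eq_norm, add_sub_add_left_eq_sub] at this
    calc |∫ q : Ed d × Ed d, (g (x + q.2) - g (x + q.1)) ∂γ|
        ≤ ∫ q : Ed d × Ed d, |g (x + q.2) - g (x + q.1)| ∂γ := by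
          simpa [Real.norm_eq_abs] using MeasureTheory.norm_integral_le_integral_norm
            (fun q : Ed d × Ed d => g (x + q.2) - g (x + q.1)) (μ := γ)
      _ ≤ ∫ q : Ed d × Ed d, (L:ℝ) * ‖q.2 - q.1‖ ∂γ := by
          exact MeasureTheory.integral_mono (hi2.sub hi1).abs (hint.const_mul _)
            fun q => pointwise q
      _ = (L:ℝ) * ∫ q : Ed d × Ed d, ‖q.2 - q.1‖ ∂γ := MeasureTheory.integral_const_mul _ _
      _ ≤ (L:ℝ) * ((Wcost p γ) ^ (1/p)).toReal := by
          gcongr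
          rw [MeasureTheory.integral_eq_lintegral_of_nonneg_ae (f := fun q : Ed d × Ed d => ‖q.2 - q.1‖)
            (Filter.Eventually.of_forall fun q => norm_nonneg _)
            (continuous_snd.sub continuous_fst).norm.aestronglyMeasurable]
          have : ∀ q : Ed d × Ed d, ENNReal.ofReal ‖q.2 - q.1‖ = (‖q.2 - q.1‖₊ : ℝ≥0∞) := by
            intro q; simp [enorm_eq_nnnorm]
          simp_rw [this]
          exact ENNReal.toReal_mono
            (ENNReal.rpow_lt_top_of_nonneg (by positivity) hfin).ne hL1
  -- step 2: pass to the infimum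
  have hWfin := WpE_lt_top hp0 hμ hν
  refine le_of_forall_pos_le_add fun ε hε => ?_
  have hlt : WpE p μ ν < WpE p μ ν + ENNReal.ofReal (ε / ((L:ℝ) + 1)) := by
    refine ENNReal.lt_add_right hWfin.ne ?_
    have hq : (0:ℝ) < ε / ((L:ℝ) + 1) := by positivity
    simp [ENNReal.ofReal_eq_zero, not_le, hq]
  obtain ⟨γ, hγ, hγlt⟩ : ∃ γ ∈ {γ : Measure (Ed d × Ed d) | IsCoupling γ μ ν},
      (Wcost p γ) ^ (1/p) < WpE p μ ν + ENNReal.ofReal (ε / ((L:ℝ) + 1)) := by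
    have h2 : WpE p μ ν < WpE p μ ν + ENNReal.ofReal (ε / ((L:ℝ) + 1)) := hlt
    rw [WpE] at h2
    obtain ⟨γ, hγlt⟩ := iInf_lt_iff.1 h2
    obtain ⟨hγmem, hγlt2⟩ := iInf_lt_iff.1 hγlt
    exact ⟨γ, hγmem, hγlt2⟩
  have hfin : Wcost p γ ≠ ∞ := by
    intro hc
    rw [hc, ENNReal.top_rpow_of_pos (by positivity)] at hγlt
    exact absurd hγlt (by simp)
  refine le_trans (percoupling γ hγ hfin) ?_
  have htr : ((Wcost p γ) ^ (1/p)).toReal ≤ Wp p μ ν + ε / ((L:ℝ) + 1) := by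
    rw [Wp_eq]
    refine le_trans (ENNReal.toReal_mono ?_ hγlt.le) ?_
    · exact (ENNReal.add_lt_top.2 ⟨hWfin, ENNReal.ofReal_lt_top⟩).ne
    · rw [ENNReal.toReal_add hWfin.ne ENNReal.ofReal_lt_top.ne]
      gcongr
      rw [ENNReal.toReal_ofReal (by positivity)]
  calc (L:ℝ) * ((Wcost p γ) ^ (1/p)).toReal ≤ (L:ℝ) * (Wp p μ ν + ε / ((L:ℝ) + 1)) := by
        refine mul_le_mul_of_nonneg_left htr (by positivity)
    _ = (L:ℝ) * Wp p μ ν + (L:ℝ) * (ε / ((L:ℝ) + 1)) := by ring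
    _ ≤ (L:ℝ) * Wp p μ ν + ε := by
        gcongr
        rw [mul_div_assoc'] 
        rw [div_le_iff₀ (by positivity)]
        nlinarith [NNReal.coe_nonneg L, hε.le]
end AuxLemmas2
section AuxLemmas3

lemma nn_rpow_inv {p : ℝ} (hp0 : 0 < p) (z : ℝ≥0) : (z ^ p) ^ (1/p) = z := by
  rw [← NNReal.rpow_mul, mul_one_div_cancel hp0.ne', NNReal.rpow_one]

/-- Superlinear growth of a penalty: `L·x ≤ M₀ + φ(x)`. -/
lemma exists_M0 {p : ℝ} (hp : 1 < p) {φ : ℝ≥0 → ℝ≥0∞} (hφ : IsPenalty p φ) (L : ℝ≥0) :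
    ∃ M0 : ℝ≥0, ∀ x : ℝ≥0, ((L * x : ℝ≥0) : ℝ≥0∞) ≤ (M0 : ℝ≥0∞) + φ x := by
  have hp0 : (0:ℝ) < p := lt_trans one_pos hp
  obtain ⟨x0, hx0⟩ : ∃ x0 : ℝ≥0, φ x0 ≠ 0 := by
    by_contra h
    push_neg at h
    obtain ⟨a, b, hab⟩ := hφ.not_const
    exact hab (by rw [h a, h b])
  have hx0pos : 0 < x0 := by
    rcases eq_or_lt_of_le (zero_le : (0:ℝ≥0) ≤ x0) with h | h
    · exact absurd (by rw [← h, hφ.map_zero]) hx0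
    · exact h
  obtain ⟨m, hmpos, hmle⟩ : ∃ m : ℝ≥0, 0 < m ∧ (m : ℝ≥0∞) ≤ φ x0 := by
    rcases eq_or_ne (φ x0) ∞ with h | h
    · exact ⟨1, one_pos, h ▸ le_top⟩
    · exact ⟨(φ x0).toNNReal, ENNReal.toNNReal_pos hx0 h, (ENNReal.coe_toNNReal h).le⟩
  set c : ℝ≥0 := m / x0 ^ p with hc
  have hcpos : 0 < c := div_pos hmpos (NNReal.rpow_pos hx0pos)
  have growth : ∀ x : ℝ≥0, x0 ≤ x → ((c * x ^ p : ℝ≥0) : ℝ≥0∞) ≤ φ x := by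
    intro x hx
    have hxpos : 0 < x := lt_of_lt_of_le hx0pos hx
    set mm : ℝ≥0 := (x0 / x) ^ p with hmm
    have hmm1 : mm ≤ 1 := NNReal.rpow_le_one (div_le_one_of_le₀ hx zero_le) hp0.le
    have hmmpos : 0 < mm := NNReal.rpow_pos (div_pos hx0pos hxpos)
    have hsum : (1 - mm) + mm = 1 := tsub_add_cancel_of_le hmm1
    have hconv := hφ.convex_rpow 0 (x ^ p) (1 - mm) mm hsum
    have harg : ((1 - mm) * 0 + mm * x ^ p) = x0 ^ p := by
      rw [mul_zero, zero_add, hmm, ← NNReal.mul_rpow, div_mul_cancel₀ _ hxpos.ne']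
    rw [harg, nn_rpow_inv hp0, nn_rpow_inv hp0] at hconv
    have h0r : ((0:ℝ≥0) ^ (1/p)) = 0 := NNReal.zero_rpow (by positivity)
    rw [h0r, hφ.map_zero, mul_zero, zero_add] at hconv
    -- hconv : φ x0 ≤ mm * φ x
    have hkey : (m : ℝ≥0∞) ≤ (mm : ℝ≥0∞) * φ x := le_trans hmle hconv
    have hdiv : (m : ℝ≥0∞) / (mm : ℝ≥0∞) ≤ φ x := by
      rw [ENNReal.div_le_iff (by exact_mod_cast hmmpos.ne') (by simp)]
      rwa [mul_comm] at hkey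
    refine le_trans (le_of_eq ?_) hdiv
    have hnn : c * x ^ p = m / mm := by
      rw [hmm, hc, NNReal.div_rpow]
      have hx0p : (x0:ℝ≥0) ^ p ≠ 0 := (NNReal.rpow_pos hx0pos).ne'
      have hxp : (x:ℝ≥0) ^ p ≠ 0 := (NNReal.rpow_pos hxpos).ne'
      field_simp
    rw [hnn, ENNReal.coe_div hmmpos.ne']
  set R : ℝ≥0 := x0 ⊔ (L / c) ^ (1/(p-1)) with hR
  refine ⟨L * R, fun x => ?_⟩
  rcases le_total x R with hxR | hxR
  · calc ((L * x : ℝ≥0) : ℝ≥0∞) ≤ ((L * R : ℝ≥0) : ℝ≥0∞) :=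
        ENNReal.coe_le_coe.2 (mul_le_mul_right hxR L)
      _ ≤ _ := le_self_add
  · have hx0le : x0 ≤ x := le_trans (le_sup_left.trans le_rfl) hxR
    have hxpos : 0 < x := lt_of_lt_of_le hx0pos hx0le
    have hLle : L ≤ c * x ^ (p - 1) := by
      have h1 : (L / c) ^ (1/(p-1)) ≤ x := le_trans le_sup_right hxR
      have hp1 : (0:ℝ) < p - 1 := by linarith
      have h2 : ((L / c) ^ (1/(p-1))) ^ (p-1) ≤ x ^ (p-1) :=
        NNReal.rpow_le_rpow h1 hp1.le
      rw [← NNReal.rpow_mul, one_div_mul_cancel hp1.ne', NNReal.rpow_one] at h2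
      calc L = c * (L / c) := by rw [mul_div_cancel₀ _ hcpos.ne']
        _ ≤ c * x ^ (p-1) := mul_le_mul_right h2 c
    have hfinal : L * x ≤ c * x ^ p := by
      have hxp : x ^ p = x ^ (p - 1) * x := by
        have h := NNReal.rpow_add hxpos.ne' (p - 1) 1
        rw [NNReal.rpow_one, sub_add_cancel] at h
        exact h
      rw [hxp, ← mul_assoc]
      exact mul_le_mul_left hLle x
    calc ((L * x : ℝ≥0) : ℝ≥0∞) ≤ ((c * x ^ p : ℝ≥0) : ℝ≥0∞) :=
        ENNReal.coe_le_coe.2 hfinal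
      _ ≤ φ x := growth x hx0le
      _ ≤ _ := le_add_self

/-- From the penalty constraint, `L·w ≤ c + t·M₀`. -/
lemma constraint_step {φ : ℝ≥0 → ℝ≥0∞} {L M0 : ℝ≥0}
    (hM0 : ∀ x : ℝ≥0, ((L * x : ℝ≥0) : ℝ≥0∞) ≤ (M0 : ℝ≥0∞) + φ x)
    {t c w : ℝ} (ht : 0 ≤ t) (hc : 0 ≤ c) (hw : 0 ≤ w)
    (hcon : phit φ t w.toNNReal ≤ ENNReal.ofReal c) :
    (L : ℝ) * w ≤ c + t * M0 := by
  by_cases h0 : 0 < t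
  · simp only [phit, if_pos h0] at hcon
    set tN := t.toNNReal with htNdef
    have htN : 0 < tN := Real.toNNReal_pos.2 h0
    set wN := w.toNNReal with hwNdef
    have h1 := hM0 (wN / tN)
    have h2 : ((L * wN : ℝ≥0) : ℝ≥0∞) ≤ (tN : ℝ≥0∞) * M0 + ENNReal.ofReal c := by
      calc ((L * wN : ℝ≥0) : ℝ≥0∞) = ((tN * (L * (wN / tN)) : ℝ≥0) : ℝ≥0∞) := by
            congr 1
            rw [mul_comm L (wN / tN), ← mul_assoc, mul_div_cancel₀ _ htN.ne']
            ring
        _ = (tN : ℝ≥0∞) * ((L * (wN / tN) : ℝ≥0) : ℝ≥0∞) := by push_cast; ring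
        _ ≤ (tN : ℝ≥0∞) * ((M0 : ℝ≥0∞) + φ (wN / tN)) := mul_le_mul_right h1 _
        _ = (tN : ℝ≥0∞) * M0 + (tN : ℝ≥0∞) * φ (wN / tN) := by rw [mul_add]
        _ ≤ (tN : ℝ≥0∞) * M0 + ENNReal.ofReal c := add_le_add_right hcon _
    have hne : (tN : ℝ≥0∞) * M0 + ENNReal.ofReal c ≠ ⊤ :=
      ENNReal.add_ne_top.2 ⟨ENNReal.mul_ne_top ENNReal.coe_ne_top ENNReal.coe_ne_top,
        ENNReal.ofReal_ne_top⟩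
    have h3 := ENNReal.toReal_mono hne h2
    rw [ENNReal.toReal_add (ENNReal.mul_ne_top ENNReal.coe_ne_top ENNReal.coe_ne_top) ENNReal.ofReal_ne_top, ENNReal.toReal_mul] at h3
    simp only [ENNReal.coe_toReal, ENNReal.toReal_ofReal hc] at h3
    have hwn : (wN : ℝ) = w := Real.coe_toNNReal w hw
    have htn : (tN : ℝ) = t := Real.coe_toNNReal t ht
    push_cast at h3
    rw [hwn, htn] at h3
    linarith
  · have ht0 : t = 0 := le_antisymm (not_lt.1 h0) ht
    simp only [phit, if_neg h0] at hcon
    by_cases hw0 : w.toNNReal = 0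
    · have : w = 0 := by
        have := Real.toNNReal_eq_zero.1 hw0
        linarith
      rw [this, ht0]
      simpa using hc
    · rw [if_neg hw0] at hcon
      exact absurd (eq_top_iff.2 hcon) ENNReal.ofReal_ne_top
end AuxLemmas3
section SopLemmas
variable {d : ℕ} {p : ℝ} {φ : ℝ≥0 → ℝ≥0∞}

def SopSet (p : ℝ) (φ : ℝ≥0 → ℝ≥0∞) (μt : Measure (Ed d)) (t : ℝ)
    (f : Ed d → ℝ) (x : Ed d) : Set ℝ :=
  { r : ℝ | ∃ ν : Measure (Ed d), MemPp p ν ∧ ∃ c : ℝ, 0 ≤ c ∧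
    phit φ t (Wp p μt ν).toNNReal ≤ ENNReal.ofReal c ∧ r = (∫ y, f (x + y) ∂ν) - c }

lemma Sop_eq_sSup (μt : Measure (Ed d)) (t : ℝ) (f : Ed d → ℝ) (x : Ed d) :
    Sop p φ μt t f x = sSup (SopSet p φ μt t f x) := rfl

lemma phit_zero_r {φ : ℝ≥0 → ℝ≥0∞} (hφ0 : φ 0 = 0) (t : ℝ) : phit φ t 0 = 0 := by
  unfold phit
  split_ifs with h h2
  · rw [zero_div, hφ0, mul_zero]
  · rfl
  · exact absurd rfl h2

variable (hp : 1 < p) (hφ0 : φ 0 = 0) {μt : Measure (Ed d)} (hμt : MemPp p μt) {t : ℝ}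
  (ht : 0 ≤ t) {g : Ed d → ℝ} {B : ℝ} (hgc : Continuous g) (hgb : ∀ y, |g y| ≤ B)

set_option linter.unusedSectionVars false

include hp hφ0 hμt hgc hgb

lemma base_mem (x : Ed d) : (∫ y, g (x + y) ∂μt) ∈ SopSet p φ μt t g x := by
  refine ⟨μt, hμt, 0, le_rfl, ?_, (sub_zero _).symm⟩
  rw [Wp_self (lt_trans one_pos hp) μt, Real.toNNReal_zero, phit_zero_r hφ0]
  exact zero_le

lemma sopSet_le (x : Ed d) : ∀ r ∈ SopSet p φ μt t g x, r ≤ B := by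
  rintro r ⟨ν, hν, c, hc, hcon, rfl⟩
  haveI := hν.1
  have h1 := (abs_le.1 (integral_shift_le ν hgc hgb x)).2
  linarith

lemma sopSet_bdd (x : Ed d) : BddAbove (SopSet p φ μt t g x) :=
  ⟨B, fun r hr => sopSet_le hp hφ0 hμt hgc hgb x r hr⟩

lemma Sop_ge (x : Ed d) : (∫ y, g (x + y) ∂μt) ≤ Sop p φ μt t g x :=
  le_csSup (sopSet_bdd hp hφ0 hμt hgc hgb x) (base_mem hp hφ0 hμt hgc hgb x)

lemma Sop_le_B (x : Ed d) : Sop p φ μt t g x ≤ B :=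
  csSup_le ⟨_, base_mem hp hφ0 hμt hgc hgb x⟩ (sopSet_le hp hφ0 hμt hgc hgb x)

lemma abs_Sop_le (x : Ed d) : |Sop p φ μt t g x| ≤ B := by
  haveI := hμt.1
  refine abs_le.2 ⟨?_, Sop_le_B hp hφ0 hμt hgc hgb x⟩
  refine le_trans ?_ (Sop_ge hp hφ0 hμt hgc hgb x)
  exact (abs_le.1 (integral_shift_le μt hgc hgb x)).1

/-- Core comparison lemma for `Sop` at possibly different base points. -/
lemma Sop_le_add {h : Ed d → ℝ} {C : ℝ} (hhc : Continuous h) (hhb : ∀ y, |h y| ≤ C)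
    {a : ℝ} {x x' : Ed d} (hcomp : ∀ y, g (x + y) ≤ h (x' + y) + a) :
    Sop p φ μt t g x ≤ Sop p φ μt t h x' + a := by
  refine csSup_le ⟨_, base_mem hp hφ0 hμt hgc hgb x⟩ ?_
  rintro r ⟨ν, hν, c, hc, hcon, rfl⟩
  haveI := hν.1
  have hint : ∫ y, g (x + y) ∂ν ≤ (∫ y, h (x' + y) ∂ν) + a := by
    have hadd : ∫ y, (h (x' + y) + a) ∂ν = (∫ y, h (x' + y) ∂ν) + a := by
      rw [MeasureTheory.integral_add (integrable_shift ν hhc hhb x')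
        (MeasureTheory.integrable_const a), MeasureTheory.integral_const,
        probReal_univ, smul_eq_mul, one_mul]
    have hmono : ∫ y, g (x + y) ∂ν ≤ ∫ y, (h (x' + y) + a) ∂ν :=
      MeasureTheory.integral_mono (integrable_shift ν hgc hgb x)
        ((integrable_shift ν hhc hhb x').add (MeasureTheory.integrable_const a)) hcomp
    rwa [hadd] at hmono
  have hmem : (∫ y, h (x' + y) ∂ν) - c ∈ SopSet p φ μt t h x' := ⟨ν, hν, c, hc, hcon, rfl⟩
  have := le_csSup (sopSet_bdd hp hφ0 hμt hhc hhb x') hmem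
  rw [Sop_eq_sSup]
  linarith

include ht

/-- One-step upper bound for Lipschitz functions (2). -/
lemma Sop_upper {L M0 : ℝ≥0} (hg : LipschitzWith L g)
    (hM0 : ∀ x : ℝ≥0, ((L * x : ℝ≥0) : ℝ≥0∞) ≤ (M0 : ℝ≥0∞) + φ x) (x : Ed d) :
    Sop p φ μt t g x ≤ (∫ y, g (x + y) ∂μt) + t * M0 := by
  refine csSup_le ⟨_, base_mem hp hφ0 hμt hgc hgb x⟩ ?_
  rintro r ⟨ν, hν, c, hc, hcon, rfl⟩
  have hd := key_diff_abs hp hμt hν hg hgb x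
  have hcs := constraint_step hM0 ht hc (Wp_nonneg p μt ν) hcon
  have := (abs_le.1 hd).2
  linarith

end SopLemmas
section SmuLemmas
variable {d : ℕ} {μ : ℝ → Measure (Ed d)} {g h : Ed d → ℝ} {B C : ℝ}

lemma Smu_apply (t : ℝ) (g : Ed d → ℝ) (x : Ed d) : Smu μ t g x = ∫ y, g (x + y) ∂(μ t) := rfl

lemma abs_Smu_le {t : ℝ} (hμt : IsProbabilityMeasure (μ t)) (hgc : Continuous g)
    (hgb : ∀ y, |g y| ≤ B) (x : Ed d) : |Smu μ t g x| ≤ B := by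
  haveI := hμt
  exact integral_shift_le (μ t) hgc hgb x

lemma Smu_lipschitz {t : ℝ} (hμt : IsProbabilityMeasure (μ t)) (hgc : Continuous g)
    (hgb : ∀ y, |g y| ≤ B) {L : ℝ≥0} (hg : LipschitzWith L g) :
    LipschitzWith L (Smu μ t g) := by
  haveI := hμt
  refine LipschitzWith.of_dist_le_mul fun x x' => ?_
  rw [Real.dist_eq]
  have key : ∀ z z' : Ed d, Smu μ t g z - Smu μ t g z' ≤ L * dist x x' →
      True := fun _ _ _ => trivial
  have hboth : ∀ z z' : Ed d, dist z z' ≤ dist x x' →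
      Smu μ t g z - Smu μ t g z' ≤ L * dist x x' := by
    intro z z' hzz
    rw [Smu_apply, Smu_apply, ← MeasureTheory.integral_sub (integrable_shift (μ t) hgc hgb z)
      (integrable_shift (μ t) hgc hgb z')]
    have hpt : ∀ y, g (z + y) - g (z' + y) ≤ (L : ℝ) * dist x x' := by
      intro y
      have h1 := hg.dist_le_mul (z + y) (z' + y)
      have h2 : dist (z + y) (z' + y) = dist z z' := by
        simp [dist_eq_norm, add_sub_add_right_eq_sub]
      rw [h2] at h1
      have h3 : g (z + y) - g (z' + y) ≤ |g (z + y) - g (z' + y)| := le_abs_self _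
      rw [← Real.dist_eq] at h3
      refine le_trans h3 (le_trans h1 ?_)
      exact mul_le_mul_of_nonneg_left hzz (by positivity)
    calc ∫ y, (g (z + y) - g (z' + y)) ∂(μ t) ≤ ∫ _, (L : ℝ) * dist x x' ∂(μ t) := by
          refine MeasureTheory.integral_mono ?_ (MeasureTheory.integrable_const _) hpt
          exact (integrable_shift (μ t) hgc hgb z).sub (integrable_shift (μ t) hgc hgb z')
      _ = (L : ℝ) * dist x x' := by simp
  have h1 := hboth x x' le_rfl
  have h2 := hboth x' x (by rw [dist_comm])
  rw [abs_sub_le_iff]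
  exact ⟨h1, h2⟩

lemma Smu_le_add {t : ℝ} (hμt : IsProbabilityMeasure (μ t)) (hgc : Continuous g)
    (hgb : ∀ y, |g y| ≤ B) (hhc : Continuous h) (hhb : ∀ y, |h y| ≤ C) {a : ℝ}
    (hcomp : ∀ y, g y ≤ h y + a) (x : Ed d) : Smu μ t g x ≤ Smu μ t h x + a := by
  haveI := hμt
  rw [Smu_apply, Smu_apply]
  have hadd : ∫ y, (h (x + y) + a) ∂(μ t) = (∫ y, h (x + y) ∂(μ t)) + a := by
    rw [MeasureTheory.integral_add (integrable_shift (μ t) hhc hhb x)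
      (MeasureTheory.integrable_const a), MeasureTheory.integral_const,
      probReal_univ, smul_eq_mul, one_mul]
  have hmono : ∫ y, g (x + y) ∂(μ t) ≤ ∫ y, (h (x + y) + a) ∂(μ t) :=
    MeasureTheory.integral_mono (integrable_shift (μ t) hgc hgb x)
      ((integrable_shift (μ t) hhc hhb x).add (MeasureTheory.integrable_const a))
      (fun y => hcomp (x + y))
  linarith

/-- Semigroup property of `Smu` from the convolution property. -/
lemma Smu_semigroup {s t : ℝ} (hconv : μ (s + t) = (μ s).conv (μ t))
    (hμs : IsProbabilityMeasure (μ s)) (hμt : IsProbabilityMeasure (μ t))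
    (hgc : Continuous g) (hgb : ∀ y, |g y| ≤ B) (x : Ed d) :
    Smu μ (s + t) g x = Smu μ s (Smu μ t g) x := by
  haveI := hμs; haveI := hμt
  rw [Smu_apply, hconv]
  rw [Measure.conv, MeasureTheory.integral_map (f := fun w => g (x + w))
    (by fun_prop : AEMeasurable (fun q : Ed d × Ed d => q.1 + q.2) ((μ s).prod (μ t)))
    (Continuous.aestronglyMeasurable (by continuity))]
  have hint : MeasureTheory.Integrable (fun q : Ed d × Ed d => g (x + (q.1 + q.2)))
      ((μ s).prod (μ t)) := by
    refine (MeasureTheory.integrable_const B).mono'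
      (Continuous.aestronglyMeasurable (by continuity)) ?_
    exact Filter.Eventually.of_forall fun q => by simpa using hgb (x + (q.1 + q.2))
  rw [MeasureTheory.integral_prod _ hint]
  rw [Smu_apply]
  congr 1
  ext z
  rw [Smu_apply]
  congr 1
  ext y
  rw [add_assoc]
end SmuLemmas
section IterLemmas
set_option linter.unusedSectionVars false
set_option maxHeartbeats 1000000
variable {d : ℕ} {p : ℝ} {φ : ℝ≥0 → ℝ≥0∞} {μ : ℝ → Measure (Ed d)}

/-- Sop preserves Lipschitz constants. -/
lemma Sop_lipschitz (hp : 1 < p) (hφ0 : φ 0 = 0) {μt : Measure (Ed d)} (hμt : MemPp p μt)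
    {t : ℝ} {g : Ed d → ℝ} {B : ℝ} (hgc : Continuous g) (hgb : ∀ y, |g y| ≤ B)
    {L : ℝ≥0} (hg : LipschitzWith L g) : LipschitzWith L (Sop p φ μt t g) := by
  refine LipschitzWith.of_dist_le_mul fun x x' => ?_
  have key : ∀ z z' : Ed d, Sop p φ μt t g z - Sop p φ μt t g z' ≤ L * dist x x' → True :=
    fun _ _ _ => trivial
  have hone : ∀ z z' : Ed d, dist z z' ≤ dist x x' →
      Sop p φ μt t g z ≤ Sop p φ μt t g z' + L * dist x x' := by
    intro z z' hzz
    refine Sop_le_add hp hφ0 hμt hgc hgb hgc hgb fun y => ?_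
    have h1 := hg.dist_le_mul (z + y) (z' + y)
    have h2 : dist (z + y) (z' + y) = dist z z' := by
      simp [dist_eq_norm, add_sub_add_right_eq_sub]
    rw [h2] at h1
    have h3 : g (z + y) - g (z' + y) ≤ |g (z + y) - g (z' + y)| := le_abs_self _
    rw [← Real.dist_eq] at h3
    nlinarith [mul_le_mul_of_nonneg_left hzz (NNReal.coe_nonneg L)]
  rw [Real.dist_eq, abs_sub_le_iff]
  constructor
  · linarith [hone x x' le_rfl]
  · linarith [hone x' x (le_of_eq (dist_comm x' x))]

/-- Sop preserves uniform continuity. -/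
lemma Sop_uniformContinuous (hp : 1 < p) (hφ0 : φ 0 = 0) {μt : Measure (Ed d)}
    (hμt : MemPp p μt) {t : ℝ} {g : Ed d → ℝ} {B : ℝ} (hgu : UniformContinuous g)
    (hgb : ∀ y, |g y| ≤ B) : UniformContinuous (Sop p φ μt t g) := by
  have hgc := hgu.continuous
  rw [Metric.uniformContinuous_iff]
  intro ε hε
  obtain ⟨δ, hδ, hδε⟩ := Metric.uniformContinuous_iff.1 hgu (ε/2) (by linarith)
  refine ⟨δ, hδ, fun {x x'} hxx => ?_⟩
  have hone : ∀ z z' : Ed d, dist z z' < δ →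
      Sop p φ μt t g z ≤ Sop p φ μt t g z' + ε/2 := by
    intro z z' hzz
    refine Sop_le_add hp hφ0 hμt hgc hgb hgc hgb fun y => ?_
    have h2 : dist (z + y) (z' + y) = dist z z' := by
      simp [dist_eq_norm, add_sub_add_right_eq_sub]
    have h1 := hδε (a := z + y) (b := z' + y) (by rw [h2]; exact hzz)
    rw [Real.dist_eq] at h1
    have h3 := (abs_le.1 h1.le).2
    linarith
  have hA := hone x x' hxx
  have hB := hone x' x (by rwa [dist_comm])
  rw [Real.dist_eq, abs_sub_lt_iff]
  constructor <;> linarith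

/-- the discretized iteration -/
def iterS (p : ℝ) (φ : ℝ≥0 → ℝ≥0∞) (μ : ℝ → Measure (Ed d)) (δ : ℝ) (k : ℕ) (s : ℝ)
    (f : Ed d → ℝ) : Ed d → ℝ :=
  (fun h => Sop p φ (μ δ) δ h)^[k] (Sop p φ (μ s) s f)

lemma SiterN_eq_iterS (n : ℕ) (t : ℝ) (f : Ed d → ℝ) :
    SiterN p φ μ n t f
      = iterS p φ μ ((2:ℝ)^n)⁻¹ ⌊(2:ℝ)^n * t⌋₊ (t - ⌊(2:ℝ)^n * t⌋₊ * ((2:ℝ)^n)⁻¹) f := rfl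

/-- The main inductive sandwich. -/
lemma iterS_props (hp : 1 < p) (hφ : IsPenalty p φ) (hμ : IsConvSemigroup p μ)
    {δ s : ℝ} (hδ : 0 < δ) (hs : 0 ≤ s) {g : Ed d → ℝ} {B : ℝ} {L : ℝ≥0}
    (hgc : Continuous g) (hgb : ∀ y, |g y| ≤ B) (hg : LipschitzWith L g)
    {M0 : ℝ≥0} (hM0 : ∀ x : ℝ≥0, ((L * x : ℝ≥0) : ℝ≥0∞) ≤ (M0 : ℝ≥0∞) + φ x) (k : ℕ) :
    Continuous (iterS p φ μ δ k s g) ∧ (∀ x, |iterS p φ μ δ k s g x| ≤ B) ∧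
      LipschitzWith L (iterS p φ μ δ k s g) ∧
      (∀ x, Smu μ (k*δ+s) g x ≤ iterS p φ μ δ k s g x) ∧
      (∀ x, iterS p φ μ δ k s g x ≤ Smu μ (k*δ+s) g x + (k*δ+s)*(M0:ℝ)) := by
  have hφ0 := hφ.map_zero
  have hμs : MemPp p (μ s) := hμ.2.2 s hs
  have hμδ : MemPp p (μ δ) := hμ.2.2 δ hδ.le
  induction k with
  | zero =>
    have hlip : LipschitzWith L (iterS p φ μ δ 0 s g) := Sop_lipschitz hp hφ0 hμs hgc hgb hg
    refine ⟨hlip.continuous, ?_, hlip, ?_, ?_⟩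
    · intro x; exact abs_Sop_le hp hφ0 hμs hgc hgb x
    · intro x
      simpa [Smu, iterS] using Sop_ge hp hφ0 hμs hgc hgb x
    · intro x
      have := Sop_upper hp hφ0 hμs hs hgc hgb hg hM0 x
      simpa [Smu, iterS] using this
  | succ k ih =>
    obtain ⟨ihc, ihb, ihl, ihlow, ihhigh⟩ := ih
    have hstep : iterS p φ μ δ (k+1) s g = Sop p φ (μ δ) δ (iterS p φ μ δ k s g) := by
      unfold iterS
      rw [Function.iterate_succ_apply']
    have htime : 0 ≤ k*δ+s := by positivity
    have hμks : MemPp p (μ (k*δ+s)) := hμ.2.2 _ htime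
    have hconv : μ (δ + (k*δ+s)) = (μ δ).conv (μ (k*δ+s)) := hμ.2.1 δ (k*δ+s) hδ.le htime
    have harith : ((k:ℝ)+1)*δ+s = δ + (k*δ+s) := by ring
    have hcast : ((k+1 : ℕ):ℝ) = (k:ℝ)+1 := by push_cast; ring
    -- Smu (k*δ+s) g is continuous, bounded B, Lipschitz L
    have hSmuL : LipschitzWith L (Smu μ (k*δ+s) g) := Smu_lipschitz hμks.1 hgc hgb hg
    have hSmuC : Continuous (Smu μ (k*δ+s) g) := hSmuL.continuous
    have hSmuB : ∀ y, |Smu μ (k*δ+s) g y| ≤ B := fun y => abs_Smu_le hμks.1 hgc hgb y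
    have hlip : LipschitzWith L (iterS p φ μ δ (k+1) s g) := by
      rw [hstep]; exact Sop_lipschitz hp hφ0 hμδ ihc ihb ihl
    refine ⟨hlip.continuous, ?_, hlip, ?_, ?_⟩
    · intro x
      rw [hstep]; exact abs_Sop_le hp hφ0 hμδ ihc ihb x
    · intro x
      rw [hstep, hcast, harith, Smu_semigroup hconv hμδ.1 hμks.1 hgc hgb x]
      calc Smu μ δ (Smu μ (k*δ+s) g) x ≤ Smu μ δ (iterS p φ μ δ k s g) x + 0 :=
            Smu_le_add hμδ.1 hSmuC hSmuB ihc ihb (fun y => by linarith [ihlow y]) x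
        _ = Smu μ δ (iterS p φ μ δ k s g) x := by ring
        _ ≤ Sop p φ (μ δ) δ (iterS p φ μ δ k s g) x := Sop_ge hp hφ0 hμδ ihc ihb x
    · intro x
      rw [hstep, hcast, harith]
      have h1 : Sop p φ (μ δ) δ (iterS p φ μ δ k s g) x ≤
          Smu μ δ (iterS p φ μ δ k s g) x + δ*(M0:ℝ) :=
        Sop_upper hp hφ0 hμδ hδ.le ihc ihb ihl hM0 x
      have h2 : Smu μ δ (iterS p φ μ δ k s g) x ≤
          Smu μ δ (Smu μ (k*δ+s) g) x + (k*δ+s)*(M0:ℝ) :=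
        Smu_le_add hμδ.1 ihc ihb hSmuC hSmuB (fun y => ihhigh y) x
      rw [Smu_semigroup hconv hμδ.1 hμks.1 hgc hgb x]
      have : (δ + (k*δ+s))*(M0:ℝ) = δ*(M0:ℝ) + (k*δ+s)*(M0:ℝ) := by ring
      linarith
end IterLemmas
section CloseLemmas
set_option linter.unusedSectionVars false
set_option maxHeartbeats 1000000
variable {d : ℕ} {p : ℝ} {φ : ℝ≥0 → ℝ≥0∞} {μ : ℝ → Measure (Ed d)}

/-- Nonexpansiveness of the iteration. -/
lemma iterS_close (hp : 1 < p) (hφ : IsPenalty p φ) (hμ : IsConvSemigroup p μ)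
    {δ s : ℝ} (hδ : 0 < δ) (hs : 0 ≤ s) {f g : Ed d → ℝ} {B1 B2 η : ℝ} (hη : 0 ≤ η)
    (hfu : UniformContinuous f) (hfb : ∀ y, |f y| ≤ B1)
    (hgu : UniformContinuous g) (hgb : ∀ y, |g y| ≤ B2)
    (hfg : ∀ y, |f y - g y| ≤ η) (k : ℕ) :
    UniformContinuous (iterS p φ μ δ k s f) ∧ (∀ y, |iterS p φ μ δ k s f y| ≤ B1) ∧
    UniformContinuous (iterS p φ μ δ k s g) ∧ (∀ y, |iterS p φ μ δ k s g y| ≤ B2) ∧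
    ∀ x, |iterS p φ μ δ k s f x - iterS p φ μ δ k s g x| ≤ η := by
  have hφ0 := hφ.map_zero
  have hμs : MemPp p (μ s) := hμ.2.2 s hs
  have hμδ : MemPp p (μ δ) := hμ.2.2 δ hδ.le
  induction k with
  | zero =>
    refine ⟨Sop_uniformContinuous hp hφ0 hμs hfu hfb,
      fun y => abs_Sop_le hp hφ0 hμs hfu.continuous hfb y,
      Sop_uniformContinuous hp hφ0 hμs hgu hgb,
      fun y => abs_Sop_le hp hφ0 hμs hgu.continuous hgb y, fun x => ?_⟩
    have hzf : iterS p φ μ δ 0 s f = Sop p φ (μ s) s f := rfl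
    have hzg : iterS p φ μ δ 0 s g = Sop p φ (μ s) s g := rfl
    rw [hzf, hzg]
    have hA : Sop p φ (μ s) s f x ≤ Sop p φ (μ s) s g x + η := by
      refine Sop_le_add hp hφ0 hμs hfu.continuous hfb hgu.continuous hgb fun y => ?_
      linarith [(abs_le.1 (hfg (x + y))).2]
    have hB : Sop p φ (μ s) s g x ≤ Sop p φ (μ s) s f x + η := by
      refine Sop_le_add hp hφ0 hμs hgu.continuous hgb hfu.continuous hfb fun y => ?_
      linarith [(abs_le.1 (hfg (x + y))).1]
    rw [abs_sub_le_iff]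
    exact ⟨by linarith, by linarith⟩
  | succ k ih =>
    obtain ⟨ihfu, ihfb, ihgu, ihgb, ihfg⟩ := ih
    have hstepf : iterS p φ μ δ (k+1) s f = Sop p φ (μ δ) δ (iterS p φ μ δ k s f) := by
      unfold iterS; rw [Function.iterate_succ_apply']
    have hstepg : iterS p φ μ δ (k+1) s g = Sop p φ (μ δ) δ (iterS p φ μ δ k s g) := by
      unfold iterS; rw [Function.iterate_succ_apply']
    rw [hstepf, hstepg]
    refine ⟨Sop_uniformContinuous hp hφ0 hμδ ihfu ihfb,
      fun y => abs_Sop_le hp hφ0 hμδ ihfu.continuous ihfb y,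
      Sop_uniformContinuous hp hφ0 hμδ ihgu ihgb,
      fun y => abs_Sop_le hp hφ0 hμδ ihgu.continuous ihgb y, fun x => ?_⟩
    have hA : Sop p φ (μ δ) δ (iterS p φ μ δ k s f) x ≤
        Sop p φ (μ δ) δ (iterS p φ μ δ k s g) x + η := by
      refine Sop_le_add hp hφ0 hμδ ihfu.continuous ihfb ihgu.continuous ihgb fun y => ?_
      linarith [(abs_le.1 (ihfg (x + y))).2]
    have hB : Sop p φ (μ δ) δ (iterS p φ μ δ k s g) x ≤
        Sop p φ (μ δ) δ (iterS p φ μ δ k s f) x + η := by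
      refine Sop_le_add hp hφ0 hμδ ihgu.continuous ihgb ihfu.continuous ihfb fun y => ?_
      linarith [(abs_le.1 (ihfg (x + y))).1]
    rw [abs_sub_le_iff]
    exact ⟨by linarith, by linarith⟩

/-- `Smu` is close to the identity. -/
lemma Smu_near_id (hp : 1 < p) {t : ℝ} (hμt : MemPp p (μ t)) {g : Ed d → ℝ} {B : ℝ} {L : ℝ≥0}
    (hgb : ∀ y, |g y| ≤ B) (hg : LipschitzWith L g) (x : Ed d) :
    |Smu μ t g x - g x| ≤ (L : ℝ) * Wp p (μ t) (Measure.dirac 0) := by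
  have hkey := key_diff_abs hp hμt (MemPp_dirac (lt_trans one_pos hp)) hg hgb x
  have hdir : ∫ y, g (x + y) ∂(Measure.dirac (0 : Ed d)) = g x := by
    rw [MeasureTheory.integral_dirac' (fun y => g (x + y)) 0
      (by exact (hg.continuous.comp (continuous_const.add continuous_id)).stronglyMeasurable)]
    simp
  rw [hdir] at hkey
  rw [abs_sub_comm]
  exact hkey

/-- Convergence of the Wasserstein distance along the sequence. -/
lemma Wp_tendsto (hp : 1 < p) (hμ : IsConvSemigroup p μ) (hμ0 : WContinuousAtZero p μ)
    {tseq : ℕ → ℝ} (htseq : ∀ n, 0 ≤ tseq n) (hlim : Filter.Tendsto tseq Filter.atTop (nhds 0)) :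
    Filter.Tendsto (fun n => Wp p (μ (tseq n)) (Measure.dirac 0)) Filter.atTop (nhds 0) := by
  have h0 : Wp p (μ 0) (Measure.dirac 0) = 0 := by
    rw [hμ.1]; exact Wp_self (lt_trans one_pos hp) _
  have hIci : Filter.Tendsto (fun t => Wp p (μ t) (Measure.dirac 0)) (nhdsWithin 0 (Set.Ici 0))
      (nhds 0) := by
    have hsplit : Set.Ici (0:ℝ) = {0} ∪ Set.Ioi 0 := by
      ext z
      simp only [Set.mem_Ici, Set.mem_union, Set.mem_singleton_iff, Set.mem_Ioi]
      constructor
      · intro hz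
        rcases eq_or_lt_of_le hz with h | h
        · exact Or.inl h.symm
        · exact Or.inr h
      · rintro (h | h)
        · exact h ▸ le_rfl
        · exact h.le
    rw [hsplit, nhdsWithin_union]
    rw [Filter.tendsto_sup]
    constructor
    · rw [nhdsWithin_singleton]
      have := tendsto_pure_nhds (fun t => Wp p (μ t) (Measure.dirac 0)) 0
      rwa [h0] at this
    · exact hμ0
  refine hIci.comp ?_
  rw [tendsto_nhdsWithin_iff]
  exact ⟨hlim, Filter.Eventually.of_forall fun n => htseq n⟩

/-- Lipschitz approximation of uniformly continuous bounded functions. -/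
lemma lipschitz_approx {f : Ed d → ℝ} (hfu : UniformContinuous f) {B : ℝ}
    (hfb : ∀ x, |f x| ≤ B) {ε : ℝ} (hε : 0 < ε) :
    ∃ (L : ℝ≥0) (g : Ed d → ℝ), LipschitzWith L g ∧ (∀ x, |g x| ≤ B) ∧ ∀ x, |f x - g x| ≤ ε := by
  have hB : 0 ≤ B := le_trans (abs_nonneg _) (hfb 0)
  obtain ⟨δ, hδ, hδε⟩ := Metric.uniformContinuous_iff.1 hfu ε hε
  set K : ℝ := (2*B + 1)/δ with hK
  have hK0 : 0 ≤ K := by positivity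
  set g : Ed d → ℝ := fun x => ⨅ y, (f y + K * dist x y) with hg
  have hbdd : ∀ x, BddBelow (Set.range fun y => f y + K * dist x y) := by
    intro x
    refine ⟨-B, ?_⟩
    rintro r ⟨y, rfl⟩
    show -B ≤ f y + K * dist x y
    have hkd : 0 ≤ K * dist x y := by positivity
    linarith [(abs_le.1 (hfb y)).1]
  have hgle : ∀ x, g x ≤ f x := by
    intro x
    have h1 : g x ≤ f x + K * dist x x := ciInf_le (hbdd x) x
    rw [dist_self, mul_zero, add_zero] at h1
    exact h1
  have hgge : ∀ x, f x - ε ≤ g x := by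
    intro x
    refine le_ciInf fun y => ?_
    rcases lt_or_ge (dist x y) δ with hd | hd
    · have h1 := hδε hd
      rw [Real.dist_eq] at h1
      have h2 := (abs_le.1 h1.le).2
      have : 0 ≤ K * dist x y := by positivity
      linarith
    · have h1 : K * δ ≤ K * dist x y := mul_le_mul_of_nonneg_left hd hK0
      have h2 : K * δ = 2*B + 1 := by rw [hK]; field_simp
      have h3 := (abs_le.1 (hfb y)).1
      have h4 := (abs_le.1 (hfb x)).2
      linarith
  have hgb : ∀ x, |g x| ≤ B := by
    intro x
    rw [abs_le]
    constructor
    · refine le_ciInf fun y => ?_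
      have : 0 ≤ K * dist x y := by positivity
      linarith [(abs_le.1 (hfb y)).1]
    · exact le_trans (hgle x) (abs_le.1 (hfb x)).2
  have hglip : LipschitzWith K.toNNReal g := by
    refine LipschitzWith.of_dist_le_mul fun x x' => ?_
    have hone : ∀ z z' : Ed d, g z ≤ g z' + K * dist z z' := by
      intro z z'
      have : g z - K * dist z z' ≤ g z' := by
        refine le_ciInf fun y => ?_
        have h1 : g z ≤ f y + K * dist z y := ciInf_le (hbdd z) y
        have h2 : dist z y ≤ dist z z' + dist z' y := dist_triangle z z' y
        have h3 : K * dist z y ≤ K * dist z z' + K * dist z' y := by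
          rw [← mul_add]
          exact mul_le_mul_of_nonneg_left h2 hK0
        linarith
      linarith
    rw [Real.dist_eq, abs_sub_le_iff, Real.coe_toNNReal K hK0]
    refine ⟨by linarith [hone x x'], ?_⟩
    rw [dist_comm]
    linarith [hone x' x]
  refine ⟨K.toNNReal, g, hglip, hgb, fun x => ?_⟩
  rw [abs_le]
  exact ⟨by linarith [hgle x], by linarith [hgge x]⟩
end CloseLemmas
/-- `‖𝒮ⁿ(tₙ)f − f‖_∞ → 0` for any sequence `tₙ ≥ 0` with `tₙ → 0`. -/
theorem stmt_9 (d : ℕ) (hd : 1 ≤ d) (p : ℝ) (hp : 1 < p)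
    (φ : ℝ≥0 → ℝ≥0∞) (hφ : IsPenalty p φ)
    (μ : ℝ → Measure (Ed d)) (hμ : IsConvSemigroup p μ) (hμ0 : WContinuousAtZero p μ)
    (f : C₀(Ed d, ℝ)) (tseq : ℕ → ℝ) (htseq : ∀ n, 0 ≤ tseq n)
    (hlim : Tendsto tseq atTop (𝓝 0)) :
    TendstoUniformly (fun n x => SiterN p φ μ n (tseq n) (⇑f) x) (⇑f) atTop := by
  have hfu : UniformContinuous ⇑f := ZeroAtInftyContinuousMap.uniformContinuous f
  have hfc : Continuous ⇑f := hfu.continuous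
  set B : ℝ := ‖f.toBCF‖ with hBdef
  have hfb : ∀ x, |f x| ≤ B := fun x => by
    have := BoundedContinuousFunction.norm_coe_le_norm f.toBCF x
    simpa [Real.norm_eq_abs, hBdef] using this
  rw [Metric.tendstoUniformly_iff]
  intro ε hε
  have hε4 : (0:ℝ) < ε/4 := by linarith
  obtain ⟨L, g, hgL, hgB, hfg⟩ := lipschitz_approx hfu hfb hε4
  obtain ⟨M0, hM0⟩ := exists_M0 hp hφ L
  have hgc := hgL.continuous
  have hgu := hgL.uniformContinuous
  have hWt := Wp_tendsto hp hμ hμ0 htseq hlim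
  have herr : Tendsto (fun n => (L:ℝ) * Wp p (μ (tseq n)) (Measure.dirac 0)
      + tseq n * (M0:ℝ)) atTop (𝓝 0) := by
    have := (hWt.const_mul (L:ℝ)).add (hlim.mul_const (M0:ℝ))
    simpa using this
  have hev : ∀ᶠ n in atTop, (L:ℝ) * Wp p (μ (tseq n)) (Measure.dirac 0)
      + tseq n * (M0:ℝ) < ε/4 := herr.eventually_lt_const hε4
  filter_upwards [hev] with n hn
  intro x
  set t := tseq n with htdef
  have ht : 0 ≤ t := htseq n
  set δn : ℝ := ((2:ℝ)^n)⁻¹ with hδn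
  have hδpos : 0 < δn := by positivity
  set k : ℕ := ⌊(2:ℝ)^n * t⌋₊ with hk
  set s : ℝ := t - k * δn with hsdef
  have hs : 0 ≤ s := by
    rw [hsdef]
    have h1 : (k:ℝ) ≤ (2:ℝ)^n * t := Nat.floor_le (by positivity)
    have h2 : (k:ℝ) * δn ≤ ((2:ℝ)^n * t) * δn := mul_le_mul_of_nonneg_right h1 hδpos.le
    have h3 : ((2:ℝ)^n * t) * δn = t := by rw [hδn]; field_simp
    linarith
  have htot : (k:ℝ)*δn + s = t := by rw [hsdef]; ring
  obtain ⟨hGc, hGb, hGl, hGlow, hGhigh⟩ := iterS_props hp hφ hμ hδpos hs hgc hgB hgL hM0 k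
  obtain ⟨-, -, -, -, hclose⟩ := iterS_close hp hφ hμ hδpos hs hε4.le hfu hfb hgu hgB hfg k
  have hμt : MemPp p (μ t) := hμ.2.2 t ht
  have hnear := Smu_near_id hp hμt hgB hgL x
  have hlow := hGlow x
  have hhigh := hGhigh x
  rw [htot] at hlow hhigh
  have hM0t : 0 ≤ t * (M0:ℝ) := by positivity
  have habs := abs_le.1 hnear
  have hiterg : |iterS p φ μ δn k s g x - g x| ≤
      (L:ℝ) * Wp p (μ t) (Measure.dirac 0) + t*(M0:ℝ) := by
    rw [abs_le]
    constructor
    · nlinarith [habs.1]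
    · nlinarith [habs.2]
  have hSf : SiterN p φ μ n t ⇑f = iterS p φ μ δn k s ⇑f := rfl
  rw [Real.dist_eq, hSf]
  have h1 := abs_le.1 (hfg x)
  have h2 := abs_le.1 hiterg
  have h3 := abs_le.1 (hclose x)
  rw [abs_lt]
  constructor <;> nlinarith [hn]
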